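/- Assume M ∈ ℝ^{n×n} is positive semidefinite and r ≥ 2. If x* with ‖x*‖₀ < s satisfies ∇f_r(x*) = 0, then x* is a global minimizer of f_r over the set S = {x : ‖x‖₀ ≤ s}; and if additionally fea(M,q) ≠ ∅, then x* ∈ sol(M,q) ∩ S. -/

import Mathlib

open Matrix

noncomputable def phi (r a b : ℝ) : ℝ :=
  (1 / r) * ((max a 0) ^ r * (max b 0) ^ r + (max (-a) 0) ^ r + (max (-b) 0) ^ r)

/-- The merit function `f_r(x) = Σᵢ φ_r(xᵢ, (Mx+q)ᵢ)`. -/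
noncomputable def fr {n : ℕ} (r : ℝ) (M : Matrix (Fin n) (Fin n) ℝ) (q : Fin n → ℝ)
    (x : Fin n → ℝ) : ℝ :=
  ∑ i, phi r (x i) (M.mulVec x i + q i)

/-- The solution set of the LCP. -/
def solSet {n : ℕ} (M : Matrix (Fin n) (Fin n) ℝ) (q : Fin n → ℝ) : Set (Fin n → ℝ) :=
  {x | (∀ i, 0 ≤ x i) ∧ (∀ i, 0 ≤ M.mulVec x i + q i) ∧
       ∑ i, x i * (M.mulVec x i + q i) = 0}

/-- The number of nonzero entries of a vector. -/
noncomputable def zeroNorm {n : ℕ} (x : Fin n → ℝ) : ℕ :=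
  (Finset.univ.filter (fun i => x i ≠ 0)).card

/-- The feasible set of the LCP. -/
def feaSet {n : ℕ} (M : Matrix (Fin n) (Fin n) ℝ) (q : Fin n → ℝ) : Set (Fin n → ℝ) :=
  {x | (∀ i, 0 ≤ x i) ∧ (∀ i, 0 ≤ M.mulVec x i + q i)}


/-- derivative of `t ↦ (max t 0)^r` for `2 ≤ r`. -/
lemma hasDerivAt_posrpow {r : ℝ} (hr : 2 ≤ r) (t : ℝ) :
    HasDerivAt (fun s : ℝ => max s 0 ^ r) (r * max t 0 ^ (r - 1)) t := by
  have hr0 : r ≠ 0 := by positivity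
  have hr1 : r - 1 ≠ 0 := by nlinarith
  rcases lt_trichotomy t 0 with ht | ht | ht
  · have hev : (fun s : ℝ => max s 0 ^ r) =ᶠ[nhds t] fun _ => (0 : ℝ) := by
      filter_upwards [Iio_mem_nhds ht] with s hs
      simp only [Set.mem_Iio] at hs
      rw [max_eq_right hs.le, Real.zero_rpow hr0]
    have : HasDerivAt (fun _ : ℝ => (0 : ℝ)) (r * max t 0 ^ (r - 1)) t := by
      rw [max_eq_right ht.le, Real.zero_rpow hr1, mul_zero]
      exact hasDerivAt_const t 0
    exact this.congr_of_eventuallyEq hev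
  · subst ht
    rw [hasDerivAt_iff_isLittleO_nhds_zero]
    rw [Asymptotics.isLittleO_iff]
    intro c hc
    have hmem : ∀ᶠ h : ℝ in nhds 0, |h| < min 1 c := by
      have : Set.Ioo (-(min 1 c)) (min 1 c) ∈ nhds (0 : ℝ) := by
        apply Ioo_mem_nhds <;> simp [hc, zero_lt_one] <;> positivity
      filter_upwards [this] with h hh
      rw [abs_lt]; exact ⟨hh.1, hh.2⟩
    filter_upwards [hmem] with h hh
    simp only [max_self, Real.zero_rpow hr1, mul_zero, smul_zero, zero_add, sub_zero,
      Real.zero_rpow hr0]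
    rcases le_or_gt h 0 with h0 | h0
    · rw [max_eq_right h0, Real.zero_rpow hr0]
      simp
      positivity
    · rw [max_eq_left h0.le]
      rw [Real.norm_eq_abs, Real.norm_eq_abs, abs_of_pos (Real.rpow_pos_of_pos h0 r),
        abs_of_pos h0]
      have h1 : h ≤ 1 := le_of_lt (lt_of_lt_of_le (lt_of_abs_lt hh) (min_le_left _ _))
      have h2 : h ^ r ≤ h ^ (2:ℝ) := Real.rpow_le_rpow_of_exponent_ge h0 h1 hr
      have h3 : h ^ (2:ℝ) = h * h := by
        rw [show (2:ℝ) = (2:ℕ) by norm_num, Real.rpow_natCast]; ring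
      have h4 : h * h ≤ c * h := by
        apply mul_le_mul_of_nonneg_right _ h0.le
        exact le_of_lt (lt_of_lt_of_le (lt_of_abs_lt hh) (min_le_right _ _))
      calc h ^ r ≤ h ^ (2:ℝ) := h2
        _ = h * h := h3
        _ ≤ c * h := h4
  · have hev : (fun s : ℝ => max s 0 ^ r) =ᶠ[nhds t] fun s => s ^ r := by
      filter_upwards [Ioi_mem_nhds ht] with s hs
      simp only [Set.mem_Ioi] at hs
      rw [max_eq_left hs.le]
    have : HasDerivAt (fun s : ℝ => s ^ r) (r * max t 0 ^ (r - 1)) t := by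
      rw [max_eq_left ht.le]
      exact Real.hasDerivAt_rpow_const (Or.inl ht.ne')
    exact this.congr_of_eventuallyEq hev

/-- derivative of `t ↦ (max (-t) 0)^r`. -/
lemma hasDerivAt_negrpow {r : ℝ} (hr : 2 ≤ r) (t : ℝ) :
    HasDerivAt (fun s : ℝ => max (-s) 0 ^ r) (-(r * max (-t) 0 ^ (r - 1))) t := by
  have h1 := (hasDerivAt_posrpow hr (-t)).comp t (hasDerivAt_neg t)
  simpa [mul_comm, Function.comp_def] using h1

/-- tangent line inequality for `s ↦ (1/r) (max s 0)^r`. -/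
lemma tangent_ineq {r : ℝ} (hr : 2 ≤ r) (s₀ s : ℝ) :
    1 / r * max s₀ 0 ^ r + max s₀ 0 ^ (r - 1) * (s - s₀) ≤ 1 / r * max s 0 ^ r := by
  have hr0 : (0:ℝ) < r := by linarith
  have hr1 : r - 1 ≠ 0 := by nlinarith
  rcases le_or_gt s₀ 0 with h0 | h0
  · rw [max_eq_right h0, Real.zero_rpow (by positivity), Real.zero_rpow hr1]
    have : (0:ℝ) ≤ 1 / r * max s 0 ^ r := by positivity
    linarith
  · rw [max_eq_left h0.le]
    have hpow : s₀ ^ (r - 1) * s₀ = s₀ ^ r := by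
      rw [← Real.rpow_add_one h0.ne' (r - 1), sub_add_cancel]
    rcases le_or_gt s 0 with hs | hs
    · rw [max_eq_right hs, Real.zero_rpow (by positivity), mul_zero]
      have h1 : s₀ ^ (r - 1) * s ≤ 0 :=
        mul_nonpos_of_nonneg_of_nonpos (Real.rpow_nonneg h0.le _) hs
      have h2 : 1 / r * s₀ ^ r ≤ s₀ ^ (r - 1) * s₀ := by
        rw [hpow]
        have : (0:ℝ) ≤ s₀ ^ r := Real.rpow_nonneg h0.le _
        have h3 : 1 / r ≤ 1 := by
          rw [div_le_one hr0]; linarith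
        nlinarith
      linarith
    · rw [max_eq_left hs.le]
      have hb := one_add_mul_self_le_rpow_one_add
        (s := s / s₀ - 1) (by
          have : 0 < s / s₀ := div_pos hs h0
          linarith) (p := r) (by linarith)
      rw [show 1 + (s / s₀ - 1) = s / s₀ by ring] at hb
      rw [Real.div_rpow hs.le h0.le] at hb
      have hsr : (0:ℝ) < s₀ ^ r := Real.rpow_pos_of_pos h0 r
      have key : s₀ ^ r * (1 + r * (s / s₀ - 1)) ≤ s ^ r := by
        have h5 := mul_le_mul_of_nonneg_left hb hsr.le
        rwa [mul_comm (s₀ ^ r) (s ^ r / s₀ ^ r), div_mul_cancel₀ _ hsr.ne'] at h5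
      have key2 : s₀ ^ r + r * (s₀ ^ (r - 1) * (s - s₀)) ≤ s ^ r := by
        have expand : s₀ ^ r * (1 + r * (s / s₀ - 1)) =
            s₀ ^ r + r * (s₀ ^ (r - 1) * (s - s₀)) := by
          rw [← hpow]
          field_simp
        rwa [expand] at key
      have key3 := mul_le_mul_of_nonneg_left key2 (by positivity : (0:ℝ) ≤ 1 / r)
      have expand2 : 1 / r * (s₀ ^ r + r * (s₀ ^ (r - 1) * (s - s₀))) =
          1 / r * s₀ ^ r + s₀ ^ (r - 1) * (s - s₀) := by
        field_simp
      rw [expand2] at key3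
      exact key3

section FD
variable {n : ℕ} (r : ℝ) (M : Matrix (Fin n) (Fin n) ℝ) (q : Fin n → ℝ)

/-- the continuous linear map `h ↦ (M h) i`. -/
noncomputable def rowCLM (i : Fin n) : (Fin n → ℝ) →L[ℝ] ℝ :=
  ∑ j, M i j • (ContinuousLinearMap.proj j)

lemma rowCLM_apply (i : Fin n) (h : Fin n → ℝ) :
    rowCLM M i h = M.mulVec h i := by
  simp [rowCLM, Matrix.mulVec, dotProduct, ContinuousLinearMap.sum_apply]

lemma hasFDerivAt_row (i : Fin n) (x : Fin n → ℝ) :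
    HasFDerivAt (fun y : Fin n → ℝ => M.mulVec y i + q i) (rowCLM M i) x := by
  have h1 : ∀ y : Fin n → ℝ, M.mulVec y i + q i = (∑ j, M i j * y j) + q i := by
    intro y; simp [Matrix.mulVec, dotProduct]
  simp only [h1]
  apply HasFDerivAt.add_const
  have : HasFDerivAt (fun y : Fin n → ℝ => ∑ j, M i j * y j)
      (∑ j, M i j • (ContinuousLinearMap.proj j : (Fin n → ℝ) →L[ℝ] ℝ)) x := by
    apply HasFDerivAt.fun_sum
    intro j _
    exact ((ContinuousLinearMap.proj j : (Fin n → ℝ) →L[ℝ] ℝ).hasFDerivAt).const_mul (M i j)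
  exact this

lemma fr_hasFDerivAt (hr : 2 ≤ r) (x : Fin n → ℝ) :
    HasFDerivAt (fr r M q)
      (∑ i, ((max (x i) 0 ^ (r-1) * max (M.mulVec x i + q i) 0 ^ r
               - max (-(x i)) 0 ^ (r-1)) • (ContinuousLinearMap.proj i : (Fin n → ℝ) →L[ℝ] ℝ)
           + (max (x i) 0 ^ r * max (M.mulVec x i + q i) 0 ^ (r-1)
               - max (-(M.mulVec x i + q i)) 0 ^ (r-1)) • rowCLM M i)) x := by
  have hr0 : (0:ℝ) < r := by linarith
  apply HasFDerivAt.fun_sum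
  intro i _
  set b : ℝ := M.mulVec x i + q i with hb
  have hproj : HasFDerivAt (fun y : Fin n → ℝ => y i)
      (ContinuousLinearMap.proj i : (Fin n → ℝ) →L[ℝ] ℝ) x :=
    by exact (ContinuousLinearMap.proj (R := ℝ) (φ := fun _ : Fin n => ℝ) i).hasFDerivAt
  have hrow := hasFDerivAt_row M q i x
  have h1 : HasFDerivAt (fun y : Fin n → ℝ => max (y i) 0 ^ r)
      ((r * max (x i) 0 ^ (r-1)) • (ContinuousLinearMap.proj i : (Fin n → ℝ) →L[ℝ] ℝ)) x :=
    by have := (hasDerivAt_posrpow hr (x i)).comp_hasFDerivAt x hproj; exact this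
  have h2 : HasFDerivAt (fun y : Fin n → ℝ => max (M.mulVec y i + q i) 0 ^ r)
      ((r * max b 0 ^ (r-1)) • rowCLM M i) x :=
    by have := (hasDerivAt_posrpow hr b).comp_hasFDerivAt x hrow; exact this
  have h3 : HasFDerivAt (fun y : Fin n → ℝ => max (-(y i)) 0 ^ r)
      ((-(r * max (-(x i)) 0 ^ (r-1))) • (ContinuousLinearMap.proj i : (Fin n → ℝ) →L[ℝ] ℝ)) x :=
    by have := (hasDerivAt_negrpow hr (x i)).comp_hasFDerivAt x hproj; exact this
  have h4 : HasFDerivAt (fun y : Fin n → ℝ => max (-(M.mulVec y i + q i)) 0 ^ r)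
      ((-(r * max (-b) 0 ^ (r-1))) • rowCLM M i) x :=
    by have := (hasDerivAt_negrpow hr b).comp_hasFDerivAt x hrow; exact this
  have h5 := (((h1.fun_mul h2).fun_add h3).fun_add h4).const_mul (1/r)
  have heq : (fun y : Fin n → ℝ => phi r (y i) (M.mulVec y i + q i)) =
      fun y : Fin n → ℝ => 1/r * ((max (y i) 0 ^ r * max (M.mulVec y i + q i) 0 ^ r
        + max (-(y i)) 0 ^ r) + max (-(M.mulVec y i + q i)) 0 ^ r) := by
    funext y; simp only [phi]
  rw [heq]
  convert h5 using 1
  · rfl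
  ext h
  simp only [ContinuousLinearMap.smul_apply, ContinuousLinearMap.add_apply,
    ContinuousLinearMap.coe_smul', Pi.smul_apply, smul_eq_mul]
  field_simp
  ring

end FD

/-- products of positive and negative part powers vanish -/
lemma posneg_zero {e₁ e₂ : ℝ} (h1 : e₁ ≠ 0) (h2 : e₂ ≠ 0) (t : ℝ) :
    max t 0 ^ e₁ * max (-t) 0 ^ e₂ = 0 := by
  rcases le_total t 0 with h | h
  · rw [max_eq_right h, Real.zero_rpow h1, zero_mul]
  · rw [max_eq_right (by linarith : -t ≤ 0), Real.zero_rpow h2, mul_zero]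

lemma negpart_mul {r : ℝ} (hr : 2 ≤ r) (t : ℝ) :
    max (-t) 0 ^ (r - 1) * t = -(max (-t) 0 ^ r) := by
  have hr1 : r - 1 ≠ 0 := by intro h; nlinarith [h]
  rcases le_total 0 t with h | h
  · rw [max_eq_right (by linarith : -t ≤ 0), Real.zero_rpow hr1,
      Real.zero_rpow (by positivity : r ≠ 0)]
    ring
  · rcases eq_or_lt_of_le h with h' | h'
    · subst h'  -- wrong direction maybe
      simp [Real.zero_rpow hr1, Real.zero_rpow (by positivity : r ≠ 0)]
    · have hm : max (-t) 0 = -t := max_eq_left (by linarith)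
      rw [hm]
      have : (-t) ^ (r - 1) * (-t) = (-t) ^ r := by
        rw [← Real.rpow_add_one (by linarith : (-t) ≠ 0) (r - 1), sub_add_cancel]
      nlinarith [this]

set_option maxHeartbeats 1000000 in
theorem stmt_18 {n : ℕ} (s : ℕ) (r : ℝ) (hr : 2 ≤ r)
    (M : Matrix (Fin n) (Fin n) ℝ) (q : Fin n → ℝ)
    (hpsd : ∀ x : Fin n → ℝ, 0 ≤ ∑ i, x i * M.mulVec x i)
    (x' : Fin n → ℝ) (hx's : zeroNorm x' < s) (hstat : fderiv ℝ (fr r M q) x' = 0) :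
    (∀ x : Fin n → ℝ, zeroNorm x ≤ s → fr r M q x' ≤ fr r M q x) ∧
    ((feaSet M q).Nonempty → x' ∈ solSet M q ∧ zeroNorm x' ≤ s) := by
  have hr0 : (0:ℝ) < r := by linarith
  have hrne : r ≠ 0 := ne_of_gt hr0
  have hr1 : r - 1 ≠ 0 := by intro h; nlinarith [h]
  set b : Fin n → ℝ := fun i => M.mulVec x' i + q i with hbdef
  set u : Fin n → ℝ := fun i =>
    max (x' i) 0 ^ (r-1) * max (b i) 0 ^ r - max (-(x' i)) 0 ^ (r-1) with hudef
  set v : Fin n → ℝ := fun i =>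
    max (x' i) 0 ^ r * max (b i) 0 ^ (r-1) - max (-(b i)) 0 ^ (r-1) with hvdef
  -- stationarity identity
  have hfd := fr_hasFDerivAt r M q hr x'
  have hL0 := hfd.fderiv
  rw [hstat] at hL0
  have hkey : ∀ h : Fin n → ℝ,
      ∑ i, (u i * h i + v i * M.mulVec h i) = 0 := by
    intro h
    have h0 : (∑ i, ((max (x' i) 0 ^ (r-1) * max (M.mulVec x' i + q i) 0 ^ r
               - max (-(x' i)) 0 ^ (r-1)) • (ContinuousLinearMap.proj i : (Fin n → ℝ) →L[ℝ] ℝ)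
           + (max (x' i) 0 ^ r * max (M.mulVec x' i + q i) 0 ^ (r-1)
               - max (-(M.mulVec x' i + q i)) 0 ^ (r-1)) • rowCLM M i)) h = 0 := by
      rw [← hL0]
      rfl
    simp only [ContinuousLinearMap.sum_apply, ContinuousLinearMap.add_apply,
      ContinuousLinearMap.smul_apply, ContinuousLinearMap.proj_apply,
      rowCLM_apply, smul_eq_mul] at h0
    simp only [hudef, hvdef, hbdef]
    exact h0
  -- complementarity at x'
  have hvv : 0 ≤ ∑ i, v i * M.mulVec v i := hpsd v
  have hsum0 := hkey v
  rw [Finset.sum_add_distrib] at hsum0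
  have huv_expand : ∀ i, u i * v i =
      (max (x' i) 0 ^ (r-1) * max (b i) 0 ^ r) *
        (max (x' i) 0 ^ r * max (b i) 0 ^ (r-1))
      + max (-(x' i)) 0 ^ (r-1) * max (-(b i)) 0 ^ (r-1) := by
    intro i
    have e1 : max (b i) 0 ^ r * max (-(b i)) 0 ^ (r-1) = 0 :=
      posneg_zero hrne hr1 (b i)
    have e2 : max (x' i) 0 ^ r * max (-(x' i)) 0 ^ (r-1) = 0 :=
      posneg_zero hrne hr1 (x' i)
    simp only [hudef, hvdef]
    linear_combination (-(max (x' i) 0 ^ (r-1))) * e1 + (-(max (b i) 0 ^ (r-1))) * e2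
  have huv_nonneg : ∀ i ∈ Finset.univ, (0:ℝ) ≤ u i * v i := by
    intro i _
    rw [huv_expand i]
    have p1 : (0:ℝ) ≤ max (x' i) 0 := le_max_right _ _
    have p2 : (0:ℝ) ≤ max (b i) 0 := le_max_right _ _
    have p3 : (0:ℝ) ≤ max (-(x' i)) 0 := le_max_right _ _
    have p4 : (0:ℝ) ≤ max (-(b i)) 0 := le_max_right _ _
    positivity
  have huv0 : ∀ i ∈ Finset.univ, u i * v i = 0 := by
    rw [← Finset.sum_eq_zero_iff_of_nonneg huv_nonneg]
    have hle : ∑ i, u i * v i ≤ 0 := by linarith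
    have hge : 0 ≤ ∑ i, u i * v i := Finset.sum_nonneg huv_nonneg
    linarith
  -- pointwise conclusions
  have hcompl : ∀ i, max (x' i) 0 = 0 ∨ max (b i) 0 = 0 := by
    intro i
    have h1 := huv0 i (Finset.mem_univ i)
    rw [huv_expand i] at h1
    have p3 : (0:ℝ) ≤ max (-(x' i)) 0 ^ (r-1) := Real.rpow_nonneg (le_max_right _ _) _
    have p4 : (0:ℝ) ≤ max (-(b i)) 0 ^ (r-1) := Real.rpow_nonneg (le_max_right _ _) _
    have p1 : (0:ℝ) ≤ max (x' i) 0 ^ (r-1) * max (b i) 0 ^ r := by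
      have := Real.rpow_nonneg (le_max_right (x' i) 0) (r-1)
      have := Real.rpow_nonneg (le_max_right (b i) 0) r
      positivity
    have p2 : (0:ℝ) ≤ max (x' i) 0 ^ r * max (b i) 0 ^ (r-1) := by
      have := Real.rpow_nonneg (le_max_right (x' i) 0) r
      have := Real.rpow_nonneg (le_max_right (b i) 0) (r-1)
      positivity
    have hP : (0:ℝ) ≤ (max (x' i) 0 ^ (r-1) * max (b i) 0 ^ r) *
        (max (x' i) 0 ^ r * max (b i) 0 ^ (r-1)) := mul_nonneg p1 p2
    have hQ : (0:ℝ) ≤ max (-(x' i)) 0 ^ (r-1) * max (-(b i)) 0 ^ (r-1) := mul_nonneg p3 p4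
    have hz : (max (x' i) 0 ^ (r-1) * max (b i) 0 ^ r) *
        (max (x' i) 0 ^ r * max (b i) 0 ^ (r-1)) = 0 := by linarith
    rcases mul_eq_zero.1 hz with h | h
    · rcases mul_eq_zero.1 h with h' | h'
      · exact Or.inl ((Real.rpow_eq_zero (le_max_right _ _) hr1).1 h')
      · exact Or.inr ((Real.rpow_eq_zero (le_max_right _ _) hrne).1 h')
    · rcases mul_eq_zero.1 h with h' | h'
      · exact Or.inl ((Real.rpow_eq_zero (le_max_right _ _) hrne).1 h')
      · exact Or.inr ((Real.rpow_eq_zero (le_max_right _ _) hr1).1 h')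
  have hu_eq : ∀ i, u i = -(max (-(x' i)) 0 ^ (r-1)) := by
    intro i
    have : max (x' i) 0 ^ (r-1) * max (b i) 0 ^ r = 0 := by
      rcases hcompl i with h | h
      · rw [h, Real.zero_rpow hr1, zero_mul]
      · rw [h, Real.zero_rpow hrne, mul_zero]
    simp only [hudef]
    rw [this]; ring
  have hv_eq : ∀ i, v i = -(max (-(b i)) 0 ^ (r-1)) := by
    intro i
    have : max (x' i) 0 ^ r * max (b i) 0 ^ (r-1) = 0 := by
      rcases hcompl i with h | h
      · rw [h, Real.zero_rpow hrne, zero_mul]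
      · rw [h, Real.zero_rpow hr1, mul_zero]
    simp only [hvdef]
    rw [this]; ring
  have hfrx' : fr r M q x' = ∑ i, (1/r * max (-(x' i)) 0 ^ r + 1/r * max (-(b i)) 0 ^ r) := by
    unfold fr phi
    apply Finset.sum_congr rfl
    intro i _
    simp only [hbdef]
    have : max (x' i) 0 ^ r * max (M.mulVec x' i + q i) 0 ^ r = 0 := by
      rcases hcompl i with h | h
      · rw [show max (x' i) 0 = 0 from h, Real.zero_rpow hrne, zero_mul]
      · rw [show max (M.mulVec x' i + q i) 0 = 0 from h, Real.zero_rpow hrne, mul_zero]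
    rw [this]
    ring
  -- PART 1
  have part1 : ∀ x : Fin n → ℝ, fr r M q x' ≤ fr r M q x := by
    intro y
    set d : Fin n → ℝ := fun i => M.mulVec y i + q i with hddef
    have hperi : ∀ i ∈ Finset.univ,
        (1/r * max (-(x' i)) 0 ^ r + 1/r * max (-(b i)) 0 ^ r)
        + (max (-(x' i)) 0 ^ (r-1) * ((-(y i)) - (-(x' i)))
           + max (-(b i)) 0 ^ (r-1) * ((-(d i)) - (-(b i))))
        ≤ phi r (y i) (d i) := by
      intro i _
      have t1 := tangent_ineq hr (-(x' i)) (-(y i))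
      have t2 := tangent_ineq hr (-(b i)) (-(d i))
      have h0 : (0:ℝ) ≤ 1/r * (max (y i) 0 ^ r * max (d i) 0 ^ r) := by
        have := Real.rpow_nonneg (le_max_right (y i) 0) r
        have := Real.rpow_nonneg (le_max_right (d i) 0) r
        positivity
      have hphi : phi r (y i) (d i) = 1/r * (max (y i) 0 ^ r * max (d i) 0 ^ r)
          + 1/r * max (-(y i)) 0 ^ r + 1/r * max (-(d i)) 0 ^ r := by
        unfold phi; ring
      rw [hphi]
      linarith [t1, t2, h0]
    have hsumle := Finset.sum_le_sum hperi
    have hcorr : ∑ i, (max (-(x' i)) 0 ^ (r-1) * ((-(y i)) - (-(x' i)))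
        + max (-(b i)) 0 ^ (r-1) * ((-(d i)) - (-(b i)))) = 0 := by
      have hk := hkey (x' - y)
      have heq : ∀ i, max (-(x' i)) 0 ^ (r-1) * ((-(y i)) - (-(x' i)))
          + max (-(b i)) 0 ^ (r-1) * ((-(d i)) - (-(b i)))
          = -(u i * (x' - y) i + v i * M.mulVec (x' - y) i) := by
        intro i
        rw [hu_eq i, hv_eq i]
        have hMsub : M.mulVec (x' - y) i = M.mulVec x' i - M.mulVec y i := by
          rw [Matrix.mulVec_sub]; rfl
        rw [hMsub]
        simp only [Pi.sub_apply, hbdef, hddef]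
        ring
      rw [Finset.sum_congr rfl (fun i _ => heq i), Finset.sum_neg_distrib, hk, neg_zero]
    rw [Finset.sum_add_distrib, hcorr, add_zero, ← hfrx'] at hsumle
    calc fr r M q x' ≤ ∑ i, phi r (y i) (d i) := hsumle
      _ = fr r M q y := by
        unfold fr
        exact Finset.sum_congr rfl fun i _ => by simp only [hddef]
  constructor
  · intro x _; exact part1 x
  -- PART 2
  rintro ⟨z, hz1, hz2⟩
  have hzkey := hkey z
  have hxkey := hkey x'
  -- rewrite using hu_eq, hv_eq
  have hzkey' : ∑ i, (max (-(x' i)) 0 ^ (r-1) * z i + max (-(b i)) 0 ^ (r-1) * M.mulVec z i) = 0 := by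
    have heq : ∀ i, max (-(x' i)) 0 ^ (r-1) * z i + max (-(b i)) 0 ^ (r-1) * M.mulVec z i
        = -(u i * z i + v i * M.mulVec z i) := by
      intro i; rw [hu_eq i, hv_eq i]; ring
    rw [Finset.sum_congr rfl (fun i _ => heq i), Finset.sum_neg_distrib, hzkey, neg_zero]
  have hxkey' : ∑ i, (max (-(x' i)) 0 ^ (r-1) * x' i + max (-(b i)) 0 ^ (r-1) * M.mulVec x' i) = 0 := by
    have heq : ∀ i, max (-(x' i)) 0 ^ (r-1) * x' i + max (-(b i)) 0 ^ (r-1) * M.mulVec x' i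
        = -(u i * x' i + v i * M.mulVec x' i) := by
      intro i; rw [hu_eq i, hv_eq i]; ring
    rw [Finset.sum_congr rfl (fun i _ => heq i), Finset.sum_neg_distrib, hxkey, neg_zero]
  -- step A : ∑ β^{r-1} (Mz)_i ≤ 0
  have hA : ∑ i, max (-(b i)) 0 ^ (r-1) * M.mulVec z i ≤ 0 := by
    have h1 : 0 ≤ ∑ i, max (-(x' i)) 0 ^ (r-1) * z i := by
      apply Finset.sum_nonneg
      intro i _
      exact mul_nonneg (Real.rpow_nonneg (le_max_right _ _) _) (hz1 i)
    rw [Finset.sum_add_distrib] at hzkey'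
    linarith
  -- step B : 0 ≤ ∑ β^{r-1} q_i
  have hB : 0 ≤ ∑ i, max (-(b i)) 0 ^ (r-1) * q i := by
    have h1 : 0 ≤ ∑ i, max (-(b i)) 0 ^ (r-1) * (M.mulVec z i + q i) := by
      apply Finset.sum_nonneg
      intro i _
      exact mul_nonneg (Real.rpow_nonneg (le_max_right _ _) _) (hz2 i)
    have h2 : ∑ i, max (-(b i)) 0 ^ (r-1) * (M.mulVec z i + q i)
        = (∑ i, max (-(b i)) 0 ^ (r-1) * M.mulVec z i)
          + ∑ i, max (-(b i)) 0 ^ (r-1) * q i := by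
      rw [← Finset.sum_add_distrib]
      apply Finset.sum_congr rfl
      intro i _; ring
    rw [h2] at h1
    linarith
  -- step C : ∑ β^{r-1}(Mx')_i = ∑ α^r
  have hC : ∑ i, max (-(b i)) 0 ^ (r-1) * M.mulVec x' i = ∑ i, max (-(x' i)) 0 ^ r := by
    rw [Finset.sum_add_distrib] at hxkey'
    have h1 : ∑ i, max (-(x' i)) 0 ^ (r-1) * x' i = -∑ i, max (-(x' i)) 0 ^ r := by
      rw [← Finset.sum_neg_distrib]
      apply Finset.sum_congr rfl
      intro i _
      exact negpart_mul hr (x' i)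
    rw [h1] at hxkey'
    linarith
  -- step D
  have hD : ∑ i, max (-(b i)) 0 ^ (r-1) * b i = -∑ i, max (-(b i)) 0 ^ r := by
    rw [← Finset.sum_neg_distrib]
    apply Finset.sum_congr rfl
    intro i _
    exact negpart_mul hr (b i)
  have hE : ∑ i, max (-(b i)) 0 ^ (r-1) * b i
      = ∑ i, max (-(b i)) 0 ^ (r-1) * M.mulVec x' i + ∑ i, max (-(b i)) 0 ^ (r-1) * q i := by
    rw [← Finset.sum_add_distrib]
    apply Finset.sum_congr rfl
    intro i _
    simp only [hbdef]
    ring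
  have halpha_nn : 0 ≤ ∑ i, max (-(x' i)) 0 ^ r :=
    Finset.sum_nonneg fun i _ => Real.rpow_nonneg (le_max_right _ _) _
  have hbeta_nn : 0 ≤ ∑ i, max (-(b i)) 0 ^ r :=
    Finset.sum_nonneg fun i _ => Real.rpow_nonneg (le_max_right _ _) _
  have halpha0 : ∑ i, max (-(x' i)) 0 ^ r = 0 := by
    rw [hC] at hE; rw [hD] at hE
    linarith
  have hbeta0 : ∑ i, max (-(b i)) 0 ^ r = 0 := by
    rw [hC] at hE; rw [hD] at hE
    linarith
  have hxnn : ∀ i, 0 ≤ x' i := by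
    intro i
    have h1 : max (-(x' i)) 0 ^ r = 0 := by
      have := (Finset.sum_eq_zero_iff_of_nonneg
        (fun i _ => Real.rpow_nonneg (le_max_right (-(x' i)) 0) r)).1 halpha0 i (Finset.mem_univ i)
      exact this
    have h2 : max (-(x' i)) 0 = 0 := (Real.rpow_eq_zero (le_max_right _ _) hrne).1 h1
    have := max_eq_right_iff.1 h2
    linarith
  have hbnn : ∀ i, 0 ≤ b i := by
    intro i
    have h1 : max (-(b i)) 0 ^ r = 0 := by
      exact (Finset.sum_eq_zero_iff_of_nonneg
        (fun i _ => Real.rpow_nonneg (le_max_right (-(b i)) 0) r)).1 hbeta0 i (Finset.mem_univ i)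
    have h2 : max (-(b i)) 0 = 0 := (Real.rpow_eq_zero (le_max_right _ _) hrne).1 h1
    have := max_eq_right_iff.1 h2
    linarith
  refine ⟨⟨hxnn, hbnn, ?_⟩, le_of_lt hx's⟩
  apply Finset.sum_eq_zero
  intro i _
  rcases hcompl i with h | h
  · have hle : x' i ≤ 0 := max_eq_right_iff.1 h
    have : x' i = 0 := le_antisymm hle (hxnn i)
    rw [this, zero_mul]
  · have hle : M.mulVec x' i + q i ≤ 0 := max_eq_right_iff.1 h
    have : M.mulVec x' i + q i = 0 := le_antisymm hle (hbnn i)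
    rw [this, mul_zero]
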